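/- An additive submonoid of the nonnegative cone of an ordered field is finitely generated if and only if it can be generated both by an increasing sequence and by a decreasing sequence. -/

import Mathlib

private lemma sum_le_of_sublistForall₂ {K : Type*} [Field K] [LinearOrder K] [IsStrictOrderedRing K] :
    ∀ {l₁ l₂ : List K}, List.SublistForall₂ (· ≤ ·) l₁ l₂ → (∀ x ∈ l₂, (0:K) ≤ x) →
      l₁.sum ≤ l₂.sum := by
  intro l₁ l₂ h
  induction h with
  | nil => exact fun h0 => by simpa using List.sum_nonneg h0
  | cons hab _ ih =>
      intro h0
      simp only [List.sum_cons]
      exact add_le_add hab (ih fun x hx => h0 x (List.mem_cons_of_mem _ hx))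
  | cons_right _ ih =>
      intro h0
      simp only [List.sum_cons]
      have := ih fun x hx => h0 x (List.mem_cons_of_mem _ hx)
      have h0' := h0 _ (List.mem_cons_self)
      linarith

private lemma exists_le_of_mem_closure_monotone {K : Type*} [Field K] [LinearOrder K] [IsStrictOrderedRing K]
    {f : ℕ → K} (hfmono : Monotone f) (hf0 : ∀ n, 0 ≤ f n) (v : ℕ → K)
    (hv : ∀ k, v k ∈ AddSubmonoid.closure (Set.range f)) :
    ∃ m n, m < n ∧ v m ≤ v n := by
  have hwf : (Set.range f).IsWF := by
    rw [Set.isWF_iff_no_descending_seq]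
    intro d hd hmem
    choose i hi using hmem
    have hlt : ∀ n : ℕ, i (n + 1) < i n := by
      intro n
      by_contra hc
      push_neg at hc
      have := hfmono hc
      rw [hi, hi] at this
      exact absurd (hd (Nat.lt_succ_self n)) (not_lt.2 this)
    have key : ∀ n : ℕ, i n + n ≤ i 0 := by
      intro n
      induction n with
      | zero => omega
      | succ k ih => have := hlt k; omega
    have := key (i 0 + 1)
    omega
  have hpwo : (Set.range f).IsPWO := hwf.isPWO
  have hl := Set.PartiallyWellOrderedOn.partiallyWellOrderedOn_sublistForall₂
    (· ≤ · : K → K → Prop) hpwo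
  choose L hL hLsum using fun k => AddSubmonoid.exists_list_of_mem_closure (hv k)
  obtain ⟨m, n, hmn, hrel⟩ := hl (fun k => ⟨L k, hL k⟩)
  refine ⟨m, n, hmn, ?_⟩
  rw [← hLsum m, ← hLsum n]
  refine sum_le_of_sublistForall₂ hrel fun x hx => ?_
  obtain ⟨j, rfl⟩ := hL n x hx
  exact hf0 j

theorem fg_iff_increasing_and_decreasing {K : Type*} [Field K] [LinearOrder K] [IsStrictOrderedRing K]
    (P : AddSubmonoid K) (hP : ∀ x ∈ P, 0 ≤ x) :
    P.FG ↔
      ((∃ f : ℕ → K, Monotone f ∧ (∀ n, 0 ≤ f n) ∧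
          AddSubmonoid.closure (Set.range f) = P) ∧
        (∃ g : ℕ → K, Antitone g ∧ (∀ n, 0 ≤ g n) ∧
          AddSubmonoid.closure (Set.range g) = P)) := by
  constructor
  · rintro ⟨S, hS⟩
    have hSP : ∀ x ∈ S, x ∈ P := fun x hx => hS ▸ AddSubmonoid.subset_closure hx
    rcases S.eq_empty_or_nonempty with rfl | hne
    · have hPbot : P = ⊥ := by
        rw [← hS]; simp
      have hcl : AddSubmonoid.closure (Set.range (fun _ : ℕ => (0:K))) = P := by
        rw [Set.range_const, hPbot]
        exact AddSubmonoid.closure_singleton_zero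
      exact ⟨⟨_, monotone_const, fun _ => le_refl 0, hcl⟩,
        ⟨_, antitone_const, fun _ => le_refl 0, hcl⟩⟩
    · set l := S.sort (· ≤ ·) with hl
      have hsorted : l.Pairwise (· ≤ ·) := S.pairwise_sort _
      have hmem : ∀ x, x ∈ l ↔ x ∈ S := fun x => S.mem_sort _
      have hlen : 0 < l.length := by
        rw [List.length_pos_iff]
        intro h
        obtain ⟨x, hx⟩ := hne
        rw [← hmem x, h] at hx
        simp at hx
      set f : ℕ → K := fun n => l.get ⟨min n (l.length - 1), by omega⟩ with hf
      set g : ℕ → K := fun n => l.get ⟨l.length - 1 - n, by omega⟩ with hg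
      have hget : ∀ i j : ℕ, (hi : i < l.length) → (hj : j < l.length) → i ≤ j →
          l.get ⟨i, hi⟩ ≤ l.get ⟨j, hj⟩ := by
        intro i j hi hj hij
        exact hsorted.rel_get_of_le (by exact hij)
      have hrangef : Set.range f = ↑S := by
        ext x
        constructor
        · rintro ⟨n, rfl⟩
          exact (hmem _).1 (l.get_mem _)
        · intro hx
          obtain ⟨i, hi, hix⟩ := List.mem_iff_getElem.1 ((hmem x).2 hx)
          refine ⟨i, ?_⟩
          simp only [hf]
          rw [List.get_eq_getElem]
          simp only [Nat.min_eq_left (by omega : i ≤ l.length - 1)]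
          exact hix
      have hrangeg : Set.range g = ↑S := by
        ext x
        constructor
        · rintro ⟨n, rfl⟩
          exact (hmem _).1 (l.get_mem _)
        · intro hx
          obtain ⟨i, hi, hix⟩ := List.mem_iff_getElem.1 ((hmem x).2 hx)
          refine ⟨l.length - 1 - i, ?_⟩
          have hii : l.length - 1 - (l.length - 1 - i) = i := by omega
          simp only [hg]
          rw [List.get_eq_getElem]
          simp only [hii]
          exact hix
      have hnn : ∀ x ∈ l, (0:K) ≤ x := fun x hx => hP x (hSP x ((hmem x).1 hx))
      refine ⟨⟨f, ?_, fun n => hnn _ (l.get_mem _), by rw [hrangef, hS]⟩,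
        ⟨g, ?_, fun n => hnn _ (l.get_mem _), by rw [hrangeg, hS]⟩⟩
      · intro a b hab
        exact hget _ _ _ _ (by omega)
      · intro a b hab
        exact hget _ _ _ _ (by omega)
  · rintro ⟨⟨f, hfmono, hf0, hfcl⟩, ⟨g, hganti, hg0, hgcl⟩⟩
    have key : ∃ N : ℕ, ∀ n, N ≤ n → g n = g N := by
      by_contra h
      push_neg at h
      choose nf hnf1 hnf2 using h
      set φ : ℕ → ℕ := fun k => nf^[k] 0 with hφ
      have hstep : ∀ k, g (φ (k + 1)) < g (φ k) := by
        intro k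
        have hφs : φ (k + 1) = nf (φ k) := Function.iterate_succ_apply' nf k 0
        rw [hφs]
        exact lt_of_le_of_ne (hganti (hnf1 (φ k))) (hnf2 (φ k))
      have hanti : StrictAnti (fun k => g (φ k)) := strictAnti_nat_of_succ_lt hstep
      obtain ⟨m, n, hmn, hle⟩ := exists_le_of_mem_closure_monotone hfmono hf0
        (fun k => g (φ k)) (fun k => by rw [hfcl]; exact hgcl ▸ AddSubmonoid.subset_closure ⟨φ k, rfl⟩)
      exact absurd hle (not_le.2 (hanti hmn))
    obtain ⟨N, hN⟩ := key
    refine ⟨(Finset.range (N + 1)).image g, le_antisymm ?_ ?_⟩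
    · rw [AddSubmonoid.closure_le]
      rintro x hx
      simp only [Finset.coe_image, Set.mem_image] at hx
      obtain ⟨n, _, rfl⟩ := hx
      exact hgcl ▸ AddSubmonoid.subset_closure ⟨n, rfl⟩
    · rw [← hgcl, AddSubmonoid.closure_le]
      rintro x ⟨n, rfl⟩
      have hmemIm : ∀ m, m ≤ N → g m ∈ (↑((Finset.range (N + 1)).image g) : Set K) :=
        fun m hm => Finset.mem_coe.2
          (Finset.mem_image.2 ⟨m, Finset.mem_range.2 (by omega), rfl⟩)
      rcases le_or_gt n N with hn | hn
      · exact AddSubmonoid.subset_closure (hmemIm n hn)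
      · rw [hN n hn.le]
        exact AddSubmonoid.subset_closure (hmemIm N le_rfl)
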